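/- Let a : Fin N → ℝ be a probability vector (0 ≤ a i for all i and ∑_i a i = 1), let I : Fin N → ℝ be a binary mask (I i ∈ {0,1} for all i) with retained mass F = ∑_i I i · a i > 0, and set â i = I i · a i / F. Let V ∈ ℝ^{N×d} be a matrix. Then the L1 norm of the row vector (a − â)V is bounded by twice the evicted mass times the largest row L1 norm of V: ∑_{c=1}^{d} |∑_{i=1}^{N} (a i − â i) · V_{i c}| ≤ 2 · (∑_i (1 − I i) · a i) · (max_{k∈[N]} ∑_{c=1}^{d} |V_{k c}|). -/
import Mathlib


/-- The L1 norm of the row vector `(a − â)V` is bounded by twice the evicted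
mass times the largest row L1 norm of `V`. -/
theorem l1_norm_mask_perturbation_mul_le (N d : ℕ) (hN : 0 < N)
    (a I : Fin N → ℝ) (V : Fin N → Fin d → ℝ)
    (ha0 : ∀ i, 0 ≤ a i) (ha1 : ∑ i, a i = 1)
    (hI : ∀ i, I i = 0 ∨ I i = 1)
    (hF : 0 < ∑ i, I i * a i) :
    ∑ c : Fin d, |∑ i : Fin N, (a i - I i * a i / ∑ k, I k * a k) * V i c| ≤
      2 * (∑ i, (1 - I i) * a i) *
        Finset.univ.sup' (Finset.univ_nonempty_iff.mpr ⟨⟨0, hN⟩⟩)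
          (fun k : Fin N => ∑ c : Fin d, |V k c|) := by
  set F := ∑ k, I k * a k with hFdef
  set M := Finset.univ.sup' (Finset.univ_nonempty_iff.mpr ⟨⟨0, hN⟩⟩)
      (fun k : Fin N => ∑ c : Fin d, |V k c|) with hMdef
  have hM : ∀ i, ∑ c, |V i c| ≤ M := fun i =>
    Finset.le_sup' (fun k : Fin N => ∑ c : Fin d, |V k c|) (Finset.mem_univ i)
  have habs : ∀ i, |a i - I i * a i / F| =
      (1 - I i) * a i + (I i * a i / F - I i * a i) := by
    intro i
    rcases hI i with h | h
    · simp [h, abs_of_nonneg (ha0 i)]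
    · simp only [h, one_mul]
      rw [abs_of_nonpos]
      · ring
      · have hF1 : F ≤ 1 := by
          rw [← ha1]
          apply Finset.sum_le_sum
          intro j _
          rcases hI j with hj | hj <;> simp [hj, ha0 j]
        have : a i ≤ a i / F := by
          rw [le_div_iff₀ hF]
          nlinarith [ha0 i]
        linarith
  have hsumabs : ∑ i, |a i - I i * a i / F| = 2 * ∑ i, (1 - I i) * a i := by
    simp only [habs]
    rw [Finset.sum_add_distrib, Finset.sum_sub_distrib]
    have h2 : ∑ i, I i * a i / F = 1 := by
      rw [← Finset.sum_div, ← hFdef, div_self (ne_of_gt hF)]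
    have h3 : ∑ i, (1 - I i) * a i = 1 - F := by
      simp [sub_mul, Finset.sum_sub_distrib, ha1, hFdef]
    rw [h2, h3, hFdef] at *
    linarith
  calc ∑ c, |∑ i, (a i - I i * a i / F) * V i c|
      ≤ ∑ c, ∑ i, |(a i - I i * a i / F) * V i c| :=
        Finset.sum_le_sum fun c _ => Finset.abs_sum_le_sum_abs _ _
    _ = ∑ i, |a i - I i * a i / F| * ∑ c, |V i c| := by
        rw [Finset.sum_comm]; simp [abs_mul, Finset.mul_sum]
    _ ≤ ∑ i, |a i - I i * a i / F| * M :=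
        Finset.sum_le_sum fun i _ =>
          mul_le_mul_of_nonneg_left (hM i) (abs_nonneg _)
    _ = (∑ i, |a i - I i * a i / F|) * M := by rw [Finset.sum_mul]
    _ = 2 * (∑ i, (1 - I i) * a i) * M := by rw [hsumabs]
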